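/- Let U be an ultrafilter on a set S and f : S → S a function whose pushforward ultrafilter f_*(U) = {A ⊆ S : f⁻¹(A) ∈ U} equals U. Then there exists Y ∈ U such that f restricted to Y is the identity map on Y. -/

import Mathlib

open Function Set

section Coloring

attribute [local instance] Classical.propDecidable

variable {S : Type*}

/-- Orbit equivalence: `x ~ y` iff forward orbits of `x` and `y` meet. -/
private def orbitSetoid (f : S → S) : Setoid S where
  r x y := ∃ m n : ℕ, f^[m] x = f^[n] y
  iseqv := by
    refine ⟨fun x => ⟨0, 0, rfl⟩, ?_, ?_⟩
    · rintro x y ⟨m, n, h⟩; exact ⟨n, m, h.symm⟩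
    · rintro x y z ⟨m, n, h⟩ ⟨p, q, h'⟩
      refine ⟨p + m, n + q, ?_⟩
      calc f^[p + m] x = f^[p] (f^[m] x) := Function.iterate_add_apply f p m x
        _ = f^[p] (f^[n] y) := by rw [h]
        _ = f^[n] (f^[p] y) := by
              rw [← Function.iterate_add_apply, Nat.add_comm, Function.iterate_add_apply]
        _ = f^[n] (f^[q] z) := by rw [h']
        _ = f^[n + q] z := (Function.iterate_add_apply f n q z).symm

private noncomputable def rep (f : S → S) (x : S) : S :=
  (Quotient.mk (orbitSetoid f) x).out

private lemma rep_spec (f : S → S) (x : S) : ∃ m n : ℕ, f^[m] x = f^[n] (rep f x) := by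
  obtain ⟨m, n, h⟩ := Quotient.mk_out (s := orbitSetoid f) x
  exact ⟨n, m, h.symm⟩

private lemma rep_apply (f : S → S) (x : S) : rep f (f x) = rep f x := by
  unfold rep
  congr 1
  exact Quotient.sound ⟨0, 1, by simp⟩

/-- If no iterate of `x` is periodic, iterates of `x` are pairwise distinct. -/
private lemma iterate_cancel (f : S → S) {x : S} (hx : ∀ n, f^[n] x ∉ periodicPts f)
    {a b : ℕ} (hab : f^[a] x = f^[b] x) : a = b := by
  have key : ∀ a b : ℕ, a < b → f^[a] x = f^[b] x → False := by
    intro a b hlt heq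
    refine hx a (Function.mk_mem_periodicPts (Nat.sub_pos_of_lt hlt) ?_)
    show f^[b - a] (f^[a] x) = f^[a] x
    rw [← Function.iterate_add_apply, Nat.sub_add_cancel hlt.le, ← heq]
  rcases Nat.lt_trichotomy a b with h | h | h
  · exact absurd hab (by intro hh; exact key a b h hh)
  · exact h
  · exact absurd hab.symm (by intro hh; exact key b a h hh)

/-- Basepoint of the (unique) cycle in the component of `x`, when it exists. -/
private noncomputable def bp (f : S → S) (x : S) : S :=
  if h : ∃ n, f^[n] (rep f x) ∈ periodicPts f then f^[Nat.find h] (rep f x) else rep f x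

private lemma bp_apply (f : S → S) (x : S) : bp f (f x) = bp f x := by
  unfold bp
  rw [rep_apply]

private lemma bp_mem (f : S → S) {x : S} (hx : x ∈ periodicPts f) :
    bp f x ∈ periodicPts f := by
  obtain ⟨m, n, hmn⟩ := rep_spec f x
  obtain ⟨k, hk, hper⟩ := hx
  have hmx : f^[m] x ∈ periodicPts f := ⟨k, hk, hper.apply_iterate m⟩
  have h : ∃ n', f^[n'] (rep f x) ∈ periodicPts f := ⟨n, hmn ▸ hmx⟩
  rw [bp, dif_pos h]
  exact Nat.find_spec h

private lemma exists_iterate_bp_eq (f : S → S) {x : S} (hx : x ∈ periodicPts f) :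
    ∃ k, f^[k] (bp f x) = x := by
  -- first: bp f x and x have meeting orbits
  obtain ⟨a, b, hab⟩ := rep_spec f x
  have hbp : ∃ m n : ℕ, f^[m] (bp f x) = f^[n] x := by
    unfold bp
    split_ifs with h
    · refine ⟨b, Nat.find h + a, ?_⟩
      rw [← Function.iterate_add_apply, Nat.add_comm b (Nat.find h),
        Function.iterate_add_apply, ← hab, ← Function.iterate_add_apply]
    · exact ⟨b, a, hab.symm⟩
  obtain ⟨m, n, hmn⟩ := hbp
  -- x is periodic, so we can go around the cycle
  have hd : 0 < minimalPeriod f x := minimalPeriod_pos_of_mem_periodicPts hx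
  set e := minimalPeriod f x with he
  have hiter : f^[e * n] x = x := (isPeriodicPt_minimalPeriod f x).mul_const n
  refine ⟨e * n - n + m, ?_⟩
  rw [Function.iterate_add_apply, hmn, ← Function.iterate_add_apply,
    Nat.sub_add_cancel (Nat.le_mul_of_pos_left n hd)]
  exact hiter

/-- Cycle color by position `q` on a cycle of length `d`. -/
private def colval (d q : ℕ) : Fin 3 :=
  if Odd d ∧ q = d - 1 then 2 else if q % 2 = 0 then 0 else 1

private lemma colval_step {d p : ℕ} (hd : 2 ≤ d) (hp : p < d) :
    colval d ((p + 1) % d) ≠ colval d p := by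
  unfold colval
  have hmod : (p + 1) % d = if p + 1 = d then 0 else p + 1 := by
    split_ifs with h
    · rw [h, Nat.mod_self]
    · exact Nat.mod_eq_of_lt (by omega)
  rw [hmod]
  simp only [Nat.odd_iff]
  split_ifs <;> first
    | decide
    | (exfalso; omega)

/-- Coloring of points on cycles. -/
private noncomputable def col (f : S → S) (x : S) : Fin 3 :=
  if h : ∃ n, f^[n] (bp f x) = x then
    colval (minimalPeriod f (bp f x)) (Nat.find h) else 0

private lemma col_apply_ne (f : S → S) {x : S} (hx : x ∈ periodicPts f) (hfx : f x ≠ x) :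
    col f (f x) ≠ col f x := by
  have hb : bp f (f x) = bp f x := bp_apply f x
  have hbper : bp f x ∈ periodicPts f := bp_mem f hx
  have hdpos : 0 < minimalPeriod f (bp f x) := minimalPeriod_pos_of_mem_periodicPts hbper
  have h : ∃ n, f^[n] (bp f x) = x := exists_iterate_bp_eq f hx
  have hpx : f^[Nat.find h] (bp f x) = x := Nat.find_spec h
  have hplt : Nat.find h < minimalPeriod f (bp f x) := by
    have hmodx : f^[Nat.find h % minimalPeriod f (bp f x)] (bp f x) = x := by
      rw [Function.iterate_mod_minimalPeriod_eq]; exact hpx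
    have hle : Nat.find h ≤ Nat.find h % minimalPeriod f (bp f x) := Nat.find_le hmodx
    have hge : Nat.find h % minimalPeriod f (bp f x) ≤ Nat.find h := Nat.mod_le _ _
    have hlt := Nat.mod_lt (Nat.find h) hdpos
    omega
  have hd2 : 2 ≤ minimalPeriod f (bp f x) := by
    by_contra h2
    push_neg at h2
    have hd1 : minimalPeriod f (bp f x) = 1 := by omega
    have hfb : f (bp f x) = bp f x := by
      have hper := isPeriodicPt_minimalPeriod f (bp f x)
      rw [hd1] at hper
      exact hper
    have hp0 : Nat.find h = 0 := by omega
    rw [hp0] at hpx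
    simp only [Function.iterate_zero_apply] at hpx
    exact hfx (by rw [← hpx, hfb])
  have h' : ∃ n, f^[n] (bp f x) = f x :=
    ⟨Nat.find h + 1, by rw [Function.iterate_succ_apply', hpx]⟩
  have hpx' : f^[Nat.find h'] (bp f x) = f x := Nat.find_spec h'
  have hplt' : Nat.find h' < minimalPeriod f (bp f x) := by
    have hmodx : f^[Nat.find h' % minimalPeriod f (bp f x)] (bp f x) = f x := by
      rw [Function.iterate_mod_minimalPeriod_eq]; exact hpx'
    have hle : Nat.find h' ≤ Nat.find h' % minimalPeriod f (bp f x) := Nat.find_le hmodx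
    have hge : Nat.find h' % minimalPeriod f (bp f x) ≤ Nat.find h' := Nat.mod_le _ _
    have hlt := Nat.mod_lt (Nat.find h') hdpos
    omega
  have hstep : Nat.find h' = (Nat.find h + 1) % minimalPeriod f (bp f x) := by
    rcases Nat.lt_or_ge (Nat.find h + 1) (minimalPeriod f (bp f x)) with hc | hc
    · rw [Nat.mod_eq_of_lt hc]
      refine Function.iterate_injOn_Iio_minimalPeriod (Set.mem_Iio.mpr hplt')
        (Set.mem_Iio.mpr hc) ?_
      show f^[Nat.find h'] (bp f x) = f^[Nat.find h + 1] (bp f x)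
      rw [hpx', Function.iterate_succ_apply', hpx]
    · have hpd : Nat.find h + 1 = minimalPeriod f (bp f x) := by omega
      rw [hpd, Nat.mod_self]
      have hfxb : f x = bp f x := by
        have hper : f^[minimalPeriod f (bp f x)] (bp f x) = bp f x :=
          isPeriodicPt_minimalPeriod f (bp f x)
        rw [← hpd, Function.iterate_succ_apply', hpx] at hper
        exact hper
      have hle : Nat.find h' ≤ 0 :=
        Nat.find_le (show f^[0] (bp f x) = f x by simpa using hfxb.symm)
      omega
  have hcolx : col f x = colval (minimalPeriod f (bp f x)) (Nat.find h) := by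
    simp only [col]
    rw [dif_pos h]
  have hcolfx : col f (f x) = colval (minimalPeriod f (bp f x)) (Nat.find h') := by
    simp only [col, hb]
    rw [dif_pos h']
  rw [hcolx, hcolfx, hstep]
  exact colval_step hd2 hplt

/-- The full 3-coloring. -/
private noncomputable def chi (f : S → S) (x : S) : Fin 3 :=
  if h : ∃ n, f^[n] x ∈ periodicPts f then
    if Nat.find h = 0 then col f x
    else col f (f^[Nat.find h] x) + (if Odd (Nat.find h) then 1 else 2)
  else
    if (Classical.choose (rep_spec f x) +
        Classical.choose (Classical.choose_spec (rep_spec f x))) % 2 = 0 then 0 else 1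

private lemma chi_spec (f : S → S) : ∀ x, f x ≠ x → chi f (f x) ≠ chi f x := by
  intro x hfx
  by_cases h : ∃ n, f^[n] x ∈ periodicPts f
  · set t := Nat.find h with ht
    have hts : f^[t] x ∈ periodicPts f := Nat.find_spec h
    rcases Nat.eq_zero_or_pos t with ht0 | htpos
    · -- x itself is periodic
      have hxper : x ∈ periodicPts f := by
        have := hts; rwa [ht0, Function.iterate_zero_apply] at this
      have hfxper : f x ∈ periodicPts f := by
        obtain ⟨k, hk, hper⟩ := hxper
        exact ⟨k, hk, hper.apply⟩
      have h' : ∃ n, f^[n] (f x) ∈ periodicPts f := ⟨0, by simpa using hfxper⟩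
      have ht0' : Nat.find h' = 0 :=
        Nat.eq_zero_of_le_zero (Nat.find_le (by simpa using hfxper))
      rw [chi, chi, dif_pos h, dif_pos h', if_pos ht0', ← ht, if_pos ht0]
      exact col_apply_ne f hxper hfx
    · -- t > 0
      have ht1 : t - 1 + 1 = t := by omega
      have hsucc : f^[t - 1] (f x) = f^[t] x := by
        rw [← Function.iterate_succ_apply, Nat.succ_eq_add_one, ht1]
      have h' : ∃ n, f^[n] (f x) ∈ periodicPts f := ⟨t - 1, by rw [hsucc]; exact hts⟩
      have ht' : Nat.find h' = t - 1 := by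
        have hle : Nat.find h' ≤ t - 1 := Nat.find_le (by rw [hsucc]; exact hts)
        rcases Nat.lt_or_ge (Nat.find h') (t - 1) with hlt | hge
        · exfalso
          have hspec := Nat.find_spec h'
          rw [← Function.iterate_succ_apply] at hspec
          exact Nat.find_min h (by omega) hspec
        · omega
      have hv : f^[Nat.find h'] (f x) = f^[t] x := by
        rw [ht', hsucc]
      rw [chi, chi, dif_pos h, dif_pos h', ← ht, if_neg (by omega : ¬ t = 0)]
      rcases Nat.eq_or_lt_of_le htpos with ht1 | ht2
      · -- t = 1
        rw [if_pos (by omega : Nat.find h' = 0)]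
        have hfxv : f x = f^[t] x := by
          rw [← ht1]; rfl
        rw [if_pos (by rw [← ht1]; decide), ← hfxv]
        intro hcon
        have : col f (f x) + 1 = col f (f x) := by
          nth_rewrite 2 [hcon]  
          rfl
        revert this
        generalize col f (f x) = a
        fin_cases a <;> decide
      · -- t ≥ 2
        rw [if_neg (by omega : ¬ Nat.find h' = 0), hv]
        rcases Nat.even_or_odd t with hte | hto
        · rw [if_neg (Nat.not_odd_iff_even.mpr hte),
            if_pos (by rcases hte with ⟨k, hk⟩; rw [ht']; exact ⟨k - 1, by omega⟩)]
          generalize col f (f^[t] x) = a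
          fin_cases a <;> decide
        · rw [if_pos hto,
            if_neg (by rw [ht', Nat.not_odd_iff_even]; rcases hto with ⟨k, hk⟩; exact ⟨k, by omega⟩)]
          generalize col f (f^[t] x) = a
          fin_cases a <;> decide
  · -- no periodic point reachable from x
    have h' : ¬ ∃ n, f^[n] (f x) ∈ periodicPts f := by
      rintro ⟨n, hn⟩
      exact h ⟨n + 1, by rwa [Function.iterate_succ_apply]⟩
    have hnx : ∀ n, f^[n] x ∉ periodicPts f := by
      push_neg at h; exact h
    set m := Classical.choose (rep_spec f x) with hm
    set n := Classical.choose (Classical.choose_spec (rep_spec f x)) with hn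
    have hxr : f^[m] x = f^[n] (rep f x) :=
      Classical.choose_spec (Classical.choose_spec (rep_spec f x))
    set m' := Classical.choose (rep_spec f (f x)) with hm'
    set n' := Classical.choose (Classical.choose_spec (rep_spec f (f x))) with hn'
    have hxr' : f^[m'] (f x) = f^[n'] (rep f (f x)) :=
      Classical.choose_spec (Classical.choose_spec (rep_spec f (f x)))
    rw [rep_apply] at hxr'
    rw [← Function.iterate_succ_apply] at hxr'
    -- derive (m' + 1) + n = m + n'
    have hkey : f^[n + (m' + 1)] x = f^[n' + m] x := by
      calc f^[n + (m' + 1)] x = f^[n] (f^[m' + 1] x) := Function.iterate_add_apply f n (m'+1) x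
        _ = f^[n] (f^[n'] (rep f x)) := by rw [hxr']
        _ = f^[n'] (f^[n] (rep f x)) := by
              rw [← Function.iterate_add_apply, Nat.add_comm, Function.iterate_add_apply]
        _ = f^[n'] (f^[m] x) := by rw [hxr]
        _ = f^[n' + m] x := (Function.iterate_add_apply f n' m x).symm
    have heq : n + (m' + 1) = n' + m := iterate_cancel f hnx hkey
    have hpar : (m + n) % 2 ≠ (m' + n') % 2 := by omega
    rw [chi, chi, dif_neg h, dif_neg h']
    show (if (m' + n') % 2 = 0 then (0 : Fin 3) else 1) ≠
      (if (m + n) % 2 = 0 then (0 : Fin 3) else 1)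
    split_ifs with h1 h2 h2 <;> first | decide | (exfalso; omega)

end Coloring

/-- If the pushforward of an ultrafilter U under f equals U, then
f is the identity on some set of U. -/
theorem eq_id_of_map_eq_self {S : Type*} (U : Ultrafilter S) (f : S → S)
    (h : Ultrafilter.map f U = U) :
    ∃ Y ∈ U, ∀ y ∈ Y, f y = y := by
  obtain ⟨c, hc⟩ : ∃ c : S → Fin 3, ∀ x, f x ≠ x → c (f x) ≠ c x := ⟨chi f, chi_spec f⟩
  refine ⟨{x | f x = x}, ?_, fun y hy => hy⟩
  by_contra hN
  have hN' : {x | f x = x}ᶜ ∈ U := Ultrafilter.compl_mem_iff_notMem.mpr hN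
  -- one of the color classes is in U
  have hex : ∃ i : Fin 3, c ⁻¹' {i} ∈ U := by
    by_contra hno
    push_neg at hno
    have hmem : ((c ⁻¹' {0})ᶜ ∩ ((c ⁻¹' {1})ᶜ ∩ (c ⁻¹' {2})ᶜ)) ∈ U :=
      Filter.inter_mem (Ultrafilter.compl_mem_iff_notMem.mpr (hno 0))
        (Filter.inter_mem (Ultrafilter.compl_mem_iff_notMem.mpr (hno 1))
          (Ultrafilter.compl_mem_iff_notMem.mpr (hno 2)))
    obtain ⟨x, hx⟩ := Ultrafilter.nonempty_of_mem hmem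
    simp only [Set.mem_inter_iff, Set.mem_compl_iff, Set.mem_preimage,
      Set.mem_singleton_iff] at hx
    obtain ⟨h0, h1, h2⟩ := hx
    revert h0 h1 h2
    generalize c x = a
    fin_cases a <;> decide
  obtain ⟨i, hi⟩ := hex
  have hpre : f ⁻¹' (c ⁻¹' {i}) ∈ U := by
    have hm : c ⁻¹' {i} ∈ Ultrafilter.map f U := by rw [h]; exact hi
    exact Ultrafilter.mem_map.mp hm
  have hmem : (c ⁻¹' {i} ∩ (f ⁻¹' (c ⁻¹' {i}) ∩ {x | f x = x}ᶜ)) ∈ U :=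
    Filter.inter_mem hi (Filter.inter_mem hpre hN')
  obtain ⟨x, hx⟩ := Ultrafilter.nonempty_of_mem hmem
  simp only [Set.mem_inter_iff, Set.mem_preimage, Set.mem_singleton_iff,
    Set.mem_compl_iff, Set.mem_setOf_eq] at hx
  obtain ⟨hxi, hxf, hxne⟩ := hx
  exact hc x hxne (by rw [hxf, hxi])
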